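/- Given a set 𝕎 of welfare functions on a finite player set N with budget-balanced distribution rules f^𝕎 that guarantee the existence of a pure Nash equilibrium in all games in G(N, f^𝕎, 𝕎), where each f^W = Σ_{T∈𝒯^W} q^W_T f^T_{GWSV}[ω^{W,T}] for two-block weight systems ω^{W,T} = (λ^{W,T}, (S_1^{W,T}, S_2^{W,T})), the transitive closure ⪰_Ω^+ of the relation ⪰_Ω constitutes a partial order on N modulo the equivalence =_Ω^+; concretely, any cycle i_1 ⪰_Ω i_2 ⪰_Ω ⋯ ⪰_Ω i_k ⪰_Ω i_1 of distinct players implies i_1 =_Ω i_2 =_Ω ⋯ =_Ω i_k =_Ω i_1. -/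

import Mathlib

open scoped BigOperators Classical

namespace CostSharing

/-- A welfare sharing game on player set `N`: a finite resource set, a nonempty
finite action set (a collection of subsets of resources) for each player, and a
local welfare function at each resource. -/
structure Game (N : Type) [Fintype N] [DecidableEq N] where
  R : Type
  [finR : Fintype R]
  [decR : DecidableEq R]
  act : N → Finset (Finset R)
  act_nonempty : ∀ i, (act i).Nonempty
  Wr : R → Finset N → ℝ

attribute [instance] Game.finR Game.decR

variable {N : Type} [Fintype N] [DecidableEq N]

/-- `{a}_r`: the set of players choosing resource `r` in profile `a`. -/
def playersAt {G : Game N} (a : N → Finset G.R) (r : G.R) : Finset N :=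
  Finset.univ.filter fun i => r ∈ a i

/-- Player `i`'s utility, where `fD` assigns to each local welfare function its
local distribution rule (so resources with identical welfare functions have
identical distribution rules). -/
noncomputable def utility (G : Game N) (fD : (Finset N → ℝ) → N → Finset N → ℝ)
    (a : N → Finset G.R) (i : N) : ℝ :=
  ∑ r ∈ a i, fD (G.Wr r) i (playersAt a r)

/-- Pure Nash equilibrium. -/
def IsPNE (G : Game N) (fD : (Finset N → ℝ) → N → Finset N → ℝ)
    (a : N → Finset G.R) : Prop :=
  (∀ i, a i ∈ G.act i) ∧
    ∀ i : N, ∀ b ∈ G.act i,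
      utility G fD (Function.update a i b) i ≤ utility G fD a i

/-- Every game in the class `G(N, f^𝕎, 𝕎)` possesses a pure Nash equilibrium. -/
def GuaranteesPNE (𝕎 : Set (Finset N → ℝ))
    (fD : (Finset N → ℝ) → N → Finset N → ℝ) : Prop :=
  ∀ G : Game N, (∀ r : G.R, G.Wr r ∈ 𝕎) → ∃ a, IsPNE G fD a

/-- Every game in the single-welfare-function class `G(N, f, W)` possesses a
pure Nash equilibrium. -/
def GuaranteesPNE1 (W : Finset N → ℝ) (f : N → Finset N → ℝ) : Prop :=
  ∀ G : Game N, (∀ r : G.R, G.Wr r = W) → ∃ a, IsPNE G (fun _ => f) a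

/-- A distribution rule allocates nothing to absent players. -/
def DistRule (f : N → Finset N → ℝ) : Prop :=
  ∀ (i : N) (S : Finset N), i ∉ S → f i S = 0

/-- Budget balance: `∑_{i∈S} f(i,S) = W(S)`. -/
def BudgetBalanced (W : Finset N → ℝ) (f : N → Finset N → ℝ) : Prop :=
  ∀ S : Finset N, ∑ i ∈ S, f i S = W S

/-- The inclusion (unanimity) welfare function `W^T`. -/
def unanimity (T S : Finset N) : ℝ := if T ⊆ S then 1 else 0

/-- The basis coefficient `q^W_T` of `W` on the unanimity basis (Möbius inversion). -/
def coeff (W : Finset N → ℝ) (T : Finset N) : ℝ :=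
  ∑ R ∈ T.powerset, (-1 : ℝ) ^ (T.card - R.card) * W R

/-- The support `𝒯^W` of the basis representation of `W`. -/
noncomputable def supp (W : Finset N → ℝ) : Finset (Finset N) :=
  Finset.univ.filter fun T => coeff W T ≠ 0

/-- `𝒯^W(S)`: the contributing coalitions within `S`. -/
noncomputable def suppIn (W : Finset N → ℝ) (S : Finset N) : Finset (Finset N) :=
  (supp W).filter (· ⊆ S)

/-- `N^W(S)`: the contributing players within `S`. -/
noncomputable def contributors (W : Finset N → ℝ) (S : Finset N) : Finset N :=
  (suppIn W S).biUnion id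

/-- A weight system `ω = (λ, Σ)`: strictly positive player weights together with
an ordered partition of `N`. -/
structure WeightSystem (N : Type) [Fintype N] [DecidableEq N] where
  lam : N → ℝ
  lam_pos : ∀ i, 0 < lam i
  m : ℕ
  part : Fin m → Finset N
  part_nonempty : ∀ k, (part k).Nonempty
  part_disjoint : ∀ k l, k ≠ l → Disjoint (part k) (part l)
  part_covers : ∀ i : N, ∃ k, i ∈ part k

/-- The index of the block of the ordered partition containing player `i`. -/
noncomputable def WeightSystem.idx (ω : WeightSystem N) (i : N) : Fin ω.m :=
  (ω.part_covers i).choose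

/-- `T̄ = T ∩ S_k` where `k = min {j : S_j ∩ T ≠ ∅}`. -/
noncomputable def WeightSystem.bar (ω : WeightSystem N) (T : Finset N) : Finset N :=
  T.filter fun i => ∀ j ∈ T, ω.idx i ≤ ω.idx j

/-- The generalized weighted Shapley value basis rule `f^T_{GWSV}[ω]`. -/
noncomputable def fGWSVbasis (ω : WeightSystem N) (T : Finset N) (i : N)
    (S : Finset N) : ℝ :=
  if i ∈ ω.bar T ∧ T ⊆ S then ω.lam i / ∑ j ∈ ω.bar T, ω.lam j else 0

/-- The generalized weighted marginal contribution basis rule `f^T_{GWMC}[ω]`. -/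
noncomputable def fGWMCbasis (ω : WeightSystem N) (T : Finset N) (i : N)
    (S : Finset N) : ℝ :=
  if i ∈ ω.bar T ∧ T ⊆ S then ω.lam i else 0

/-- The generalized weighted Shapley value distribution rule `f^{W'}_{GWSV}[ω]`. -/
noncomputable def fGWSV (ω : WeightSystem N) (W' : Finset N → ℝ) (i : N)
    (S : Finset N) : ℝ :=
  ∑ T ∈ supp W', coeff W' T * fGWSVbasis ω T i S

/-- The generalized weighted marginal contribution distribution rule
`f^{W''}_{GWMC}[ω]`. -/
noncomputable def fGWMC (ω : WeightSystem N) (W'' : Finset N → ℝ) (i : N)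
    (S : Finset N) : ℝ :=
  ∑ T ∈ supp W'', coeff W'' T * fGWMCbasis ω T i S

/-- The recursively defined basis distribution rules `f^T` of a distribution
rule `f` for `W` (recursion along the min-partition of `(𝒯^W, ⊆)`). -/
noncomputable def basisRule (W : Finset N → ℝ) (f : N → Finset N → ℝ)
    (T : Finset N) (i : N) (S : Finset N) : ℝ :=
  if T ⊆ S then
    (1 / coeff W T) *
      (f i T - ∑ T' ∈ ((suppIn W T).erase T).attach,
        coeff W T'.1 * basisRule W f T'.1 i S)
  else 0
termination_by T.card
decreasing_by
  have h := T'.2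
  simp only [Finset.mem_erase, suppIn, Finset.mem_filter] at h
  exact Finset.card_lt_card (Finset.ssubset_iff_subset_ne.mpr ⟨h.2.2, h.1⟩)


/-- The GWSV basis rule `f^{W,T}` for a two-block weight system
`ω^{W,T} = (λ^{W,T}, (S₁, T∖S₁))` on `T`. -/
noncomputable def fTwoBlock (lam : N → ℝ) (S₁ T : Finset N) (i : N)
    (S : Finset N) : ℝ :=
  if i ∈ S₁ ∧ T ⊆ S then lam i / ∑ j ∈ S₁, lam j else 0

/-- Membership in `𝒯^{W+}_{xy}` for a two-block weight system on `T`. -/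
def memTplus (lam : N → ℝ) (S₁ T : Finset N) (x y : N) : Prop :=
  x ∈ T ∧ y ∈ T ∧ (0 < fTwoBlock lam S₁ T x T ∨ 0 < fTwoBlock lam S₁ T y T)

/-- The relation `i ⪰_Ω j`. -/
def succOmega (𝕎 : Set (Finset N → ℝ))
    (lam : (Finset N → ℝ) → Finset N → N → ℝ)
    (S₁ : (Finset N → ℝ) → Finset N → Finset N) (i j : N) : Prop :=
  i = j ∨ ∃ W ∈ 𝕎, ∃ T ∈ supp W,
    memTplus (lam W T) (S₁ W T) T i j ∧ i ∈ S₁ W T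


set_option linter.unusedSectionVars false
set_option maxHeartbeats 1000000

section Aux
variable {N : Type} [Fintype N] [DecidableEq N]

lemma exists_powerset_sum_ne_zero (g : Finset N → ℝ) (T₀ : Finset N) (h : g T₀ ≠ 0) :
    ∃ C : Finset N, ∑ T ∈ C.powerset, g T ≠ 0 := by
  by_contra hno
  push_neg at hno
  have key : ∀ C : Finset N, g C = 0 := by
    intro C
    induction C using Finset.strongInduction with
    | _ C ih =>
      have h1 : ∑ T ∈ C.powerset.erase C, g T + g C = ∑ T ∈ C.powerset, g T :=
        Finset.sum_erase_add _ _ (Finset.mem_powerset_self C)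
      have h2 : ∑ T ∈ C.powerset.erase C, g T = 0 := by
        apply Finset.sum_eq_zero
        intro T hT
        rcases Finset.mem_erase.mp hT with ⟨hne, hTp⟩
        exact ih T (Finset.ssubset_iff_subset_ne.mpr ⟨Finset.mem_powerset.mp hTp, hne⟩)
      rw [hno C, h2] at h1
      linarith
  exact h (key T₀)

lemma bool_cycle {k : ℕ} [NeZero k] (hk : 2 ≤ k) (x : Fin k → Bool)
    (h : ∀ j : Fin k, x j = (x (j + 1) == decide ((j + 1 : Fin k) ≠ 0))) : False := by
  have hk0 : 0 < k := by omega
  have hone : (1 : Fin k).val = 1 := by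
    rw [Fin.val_one']; exact Nat.mod_eq_of_lt hk
  have step : ∀ n : ℕ, (hn : n + 1 < k) → x ⟨n, by omega⟩ = x ⟨n + 1, hn⟩ := by
    intro n hn
    have hadd : ((⟨n, by omega⟩ : Fin k) + 1 : Fin k) = ⟨n + 1, hn⟩ := by
      apply Fin.ext
      rw [Fin.add_def]
      simp [hone, Nat.mod_eq_of_lt hn]
    have hh := h ⟨n, by omega⟩
    rw [hadd] at hh
    have hne : (⟨n + 1, hn⟩ : Fin k) ≠ 0 := by
      intro hc
      have := congrArg Fin.val hc
      simp [Fin.val_zero] at this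
    simp [hne] at hh
    exact hh
  have chain : ∀ n : ℕ, (hn : n < k) → x ⟨n, hn⟩ = x ⟨0, hk0⟩ := by
    intro n
    induction n with
    | zero => intro _; rfl
    | succ n ihn => intro hn; rw [← step n hn]; exact ihn (by omega)
  have hlast : ((⟨k - 1, by omega⟩ : Fin k) + 1 : Fin k) = 0 := by
    apply Fin.ext
    rw [Fin.add_def]
    simp only [hone, Fin.val_zero]
    have hkk : k - 1 + 1 = k := by omega
    rw [hkk, Nat.mod_self]
  have hh := h ⟨k - 1, by omega⟩
  rw [hlast] at hh
  simp at hh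
  rw [chain (k-1) (by omega)] at hh
  have h0 : (0 : Fin k) = ⟨0, hk0⟩ := rfl
  rw [← h0] at hh
  cases hx : x 0 <;> rw [hx] at hh <;> simp at hh

lemma bool_step (x1 x0 bb : Bool) (h1 : ((if x1 then !bb else !(!bb)) == x0) = bb) :
    x0 = (x1 == false) := by
  cases x1 <;> cases x0 <;> cases bb <;> simp_all

lemma bool_step' (x1 x0 bb : Bool) (h1 : ((if x1 then bb else !bb) == x0) = bb) :
    x0 = (x1 == true) := by
  cases x1 <;> cases x0 <;> cases bb <;> simp_all

end Aux

section CopyAux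
lemma fin_sub_one_val {k : ℕ} [NeZero k] (hk : 2 ≤ k) (a : Fin k) (ha : a ≠ 0) :
    (a - 1).val = a.val - 1 := by
  have hone : (1 : Fin k).val = 1 := by
    rw [Fin.val_one']; exact Nat.mod_eq_of_lt hk
  have hav : 1 ≤ a.val := by
    rcases Nat.eq_zero_or_pos a.val with h | h
    · exact absurd (Fin.ext h) ha
    · exact h
  rw [Fin.sub_def]
  simp only [hone]
  have h1 : k - 1 + a.val = k + (a.val - 1) := by omega
  rw [h1, Nat.add_mod_left, Nat.mod_eq_of_lt (by omega)]

open Fin.NatCast Fin.CommRing in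
lemma exists_copies {k : ℕ} [NeZero k] (hk : 2 ≤ k) (β δ : Fin k → ℝ)
    (hβ : ∀ j, β j ≠ 0) (l1 : Fin k) (hδ : δ l1 = 0) :
    ∃ mf : Fin k → ℕ, (∀ j, 0 < mf j) ∧
      ∀ j, (mf (j - 1) : ℝ) * |δ j| < (mf j : ℝ) * |β j| := by
  set q : Fin k → ℝ := fun j => |δ j| / |β j| with hq
  set M : ℕ → ℕ := fun n =>
    Nat.rec 1 (fun d Md => Md * (⌈q (l1 + ((d + 1 : ℕ) : Fin k))⌉₊ + 1)) n with hM
  have hM1 : ∀ n, 1 ≤ M n := by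
    intro n
    induction n with
    | zero => exact le_refl 1
    | succ d ih =>
      have : M (d + 1) = M d * (⌈q (l1 + ((d + 1 : ℕ) : Fin k))⌉₊ + 1) := rfl
      rw [this]
      exact le_trans ih (Nat.le_mul_of_pos_right _ (by omega))
  refine ⟨fun j => M ((j - l1).val), fun j => hM1 _, ?_⟩
  intro j
  show (M ((j - 1 - l1)).val : ℝ) * |δ j| < (M ((j - l1)).val : ℝ) * |β j|
  have hβpos : 0 < |β j| := abs_pos.mpr (hβ j)
  by_cases hjl : j = l1
  · have h0 : |δ j| = 0 := by rw [hjl, hδ, abs_zero]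
    rw [h0, mul_zero]
    have h1 : (0:ℝ) < (M ((j - l1).val) : ℝ) := by exact_mod_cast hM1 _
    exact mul_pos h1 hβpos
  · have hsub0 : j - l1 ≠ 0 := fun hc => hjl (by
      have := congrArg (· + l1) hc
      simpa [sub_add_cancel] using this)
    have hvpos : 1 ≤ (j - l1).val := by
      rcases Nat.eq_zero_or_pos (j - l1).val with h | h
      · exact absurd (Fin.ext h) hsub0
      · exact h
    set n := (j - l1).val with hn
    have hcast : ((n : ℕ) : Fin k) = j - l1 := Fin.cast_val_eq_self _
    have hidx : l1 + ((n : ℕ) : Fin k) = j := by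
      rw [hcast, add_sub_cancel]
    have hjm1 : ((j - 1) - l1).val = n - 1 := by
      have h1 : (j - 1) - l1 = (j - l1) - 1 := by ring
      rw [h1, fin_sub_one_val hk _ hsub0]
    have hMn : M n = M (n - 1) * (⌈q j⌉₊ + 1) := by
      have h2 : n = (n - 1) + 1 := by omega
      rw [h2]
      show M (n - 1) * (⌈q (l1 + ((n - 1 + 1 : ℕ) : Fin k))⌉₊ + 1) = _
      rw [← h2, hidx]
    rw [hjm1, hMn]
    have hq0 : 0 ≤ q j := by rw [hq]; positivity
    have hceil : q j ≤ (⌈q j⌉₊ : ℝ) := Nat.le_ceil _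
    have hqmul : q j * |β j| = |δ j| := div_mul_cancel₀ _ (ne_of_gt hβpos)
    have hd1 : (M (n-1) : ℝ) * |δ j| = (M (n-1) : ℝ) * q j * |β j| := by
      rw [mul_assoc, hqmul]
    rw [hd1]
    push_cast
    have hM1' : (1:ℝ) ≤ (M (n-1) : ℝ) := by exact_mod_cast hM1 (n-1)
    have : (M (n-1) : ℝ) * q j < (M (n-1) : ℝ) * ((⌈q j⌉₊ : ℝ) + 1) := by nlinarith
    nlinarith

end CopyAux

section L4
variable {N : Type} [Fintype N] [DecidableEq N]

lemma fD_insert_diff (W : Finset N → ℝ) (lamW : Finset N → N → ℝ)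
    (S1W : Finset N → Finset N) (fDW : N → Finset N → ℝ)
    (hform : ∀ i S, fDW i S = ∑ T ∈ supp W, coeff W T * fTwoBlock (lamW T) (S1W T) T i S)
    (i y : N) (D : Finset N) (hy : y ∉ D) :
    fDW i (insert y D) - fDW i D =
      ∑ T ∈ (insert y D).powerset,
        (if y ∈ T ∧ T ∈ supp W ∧ i ∈ S1W T then
          coeff W T * (lamW T i / ∑ z ∈ S1W T, lamW T z) else 0) := by
  rw [hform, hform, ← Finset.sum_sub_distrib]
  have hL : ∀ T ∈ supp W,
      coeff W T * fTwoBlock (lamW T) (S1W T) T i (insert y D)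
        - coeff W T * fTwoBlock (lamW T) (S1W T) T i D
      = (if y ∈ T ∧ i ∈ S1W T ∧ T ⊆ insert y D then
          coeff W T * (lamW T i / ∑ z ∈ S1W T, lamW T z) else 0) := by
    intro T hT
    unfold fTwoBlock
    by_cases hiS : i ∈ S1W T
    · by_cases hyT : y ∈ T
      · have hTD : ¬ T ⊆ D := fun hc => hy (hc hyT)
        by_cases hTins : T ⊆ insert y D
        · rw [if_pos ⟨hiS, hTins⟩, if_neg (fun hc => hTD hc.2),
            if_pos ⟨hyT, hiS, hTins⟩]
          ring
        · rw [if_neg (fun hc => hTins hc.2), if_neg (fun hc => hTD hc.2),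
            if_neg (fun hc => hTins hc.2.2)]
          ring
      · have hsub : T ⊆ insert y D ↔ T ⊆ D := by
          constructor
          · intro hc z hz
            rcases Finset.mem_insert.mp (hc hz) with rfl | hzD
            · exact absurd hz hyT
            · exact hzD
          · intro hc
            exact hc.trans (Finset.subset_insert _ _)
        by_cases hTD : T ⊆ D
        · rw [if_pos ⟨hiS, hsub.mpr hTD⟩, if_pos ⟨hiS, hTD⟩,
            if_neg (fun hc => hyT hc.1)]
          ring
        · rw [if_neg (fun hc => hTD (hsub.mp hc.2)), if_neg (fun hc => hTD hc.2),
            if_neg (fun hc => hyT hc.1)]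
          ring
    · rw [if_neg (fun hc => hiS hc.1), if_neg (fun hc => hiS hc.1),
        if_neg (fun hc => hiS hc.2.1)]
      ring
  rw [Finset.sum_congr rfl hL]
  have hpow : (insert y D).powerset = Finset.univ.filter (· ⊆ insert y D) := by
    ext T
    simp
  have hsupp : supp W = Finset.univ.filter (fun T => coeff W T ≠ 0) := rfl
  rw [hpow, hsupp, Finset.sum_filter, Finset.sum_filter]
  apply Finset.sum_congr rfl
  intro T _
  by_cases h1 : coeff W T ≠ 0 <;> by_cases h2 : y ∈ T <;> by_cases h3 : i ∈ S1W T <;>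
    by_cases h4 : T ⊆ insert y D <;>
    simp [supp, h1, h2, h3, h4]

end L4

section Construction

variable (k : ℕ) [NeZero k] (m : Fin k → ℕ)

abbrev Res := Σ g : Fin k, Bool × Fin (m g)

variable (p : Fin k → N) (A : Fin k → Finset N) (τ : Fin k → Bool)
  (Wf : Fin k → Finset N → ℝ)

noncomputable def blk (g : Fin k) (s : Bool) : Finset (Res k m) :=
  Finset.univ.filter fun r => r.1 = g ∧ r.2.1 = s

noncomputable def Mand (i : N) : Finset (Res k m) :=
  Finset.univ.filter fun r => i ∈ A r.1

noncomputable def Xa (j : Fin k) : Finset (Res k m) :=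
  Mand k m A (p j) ∪ blk k m j true ∪ blk k m (j - 1) (τ j)

noncomputable def Ya (j : Fin k) : Finset (Res k m) :=
  Mand k m A (p j) ∪ blk k m j false ∪ blk k m (j - 1) (!τ j)

noncomputable def actF (i : N) : Finset (Finset (Res k m)) :=
  if h : ∃ j, p j = i then {Xa k m p A τ h.choose, Ya k m p A τ h.choose}
  else {Mand k m A i}

@[reducible] noncomputable def Gstar : Game N where
  R := Res k m
  act := actF k m p A τ
  act_nonempty := by
    intro i
    unfold actF
    split <;> simp
  Wr r := Wf r.1

noncomputable def xside (a : N → Finset (Res k m)) (g : Fin k) : Bool :=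
  decide (a (p g) = Xa k m p A τ g)

noncomputable def wside (a : N → Finset (Res k m)) (g : Fin k) : Bool :=
  if xside k m p A τ a g then τ g else !τ g

noncomputable def Sg (g : Fin k) (b1 b2 : Bool) : Finset N :=
  A g ∪ (if b1 then {p g} else ∅) ∪ (if b2 then {p (g + 1)} else ∅)

def Valid (a : N → Finset (Res k m)) : Prop :=
  ∀ i, a i ∈ (Gstar k m p A τ Wf).act i


variable (fD : (Finset N → ℝ) → N → Finset N → ℝ) in
noncomputable def bv (g : Fin k) : ℝ :=
  fD (Wf g) (p g) (Sg k p A g true true) - fD (Wf g) (p g) (Sg k p A g true false)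

variable (fD : (Finset N → ℝ) → N → Finset N → ℝ) in
noncomputable def dv (g : Fin k) : ℝ :=
  fD (Wf (g - 1)) (p g) (Sg k p A (g - 1) true true)
    - fD (Wf (g - 1)) (p g) (Sg k p A (g - 1) false true)

variable {k m p A τ Wf}

lemma mem_blk {r : Res k m} {g : Fin k} {s : Bool} :
    r ∈ blk k m g s ↔ r.1 = g ∧ r.2.1 = s := by simp [blk]

lemma mem_Mand {r : Res k m} {i : N} : r ∈ Mand k m A i ↔ i ∈ A r.1 := by simp [Mand]

section Facts

variable (hk : 2 ≤ k) (hinj : Function.Injective p)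
  (hm : ∀ g, 0 < m g) (hpA : ∀ g, p g ∉ A g) (hpA' : ∀ g, p (g + 1) ∉ A g)

include hk

lemma one_ne_zero' : (1 : Fin k) ≠ 0 := by
  intro hc
  have := congrArg Fin.val hc
  rw [Fin.val_one', Fin.val_zero, Nat.mod_eq_of_lt hk] at this
  omega

lemma succ_ne (j : Fin k) : j + 1 ≠ j := by
  intro hc
  have : (1 : Fin k) = 0 := by
    have := congrArg (fun z => z - j) hc
    simpa [add_comm, add_sub_cancel_right, sub_self] using this
  exact one_ne_zero' hk this

lemma pred_ne (j : Fin k) : j - 1 ≠ j := by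
  intro hc
  have : j = j + 1 := by
    have := congrArg (fun z => z + 1) hc
    simpa [sub_add_cancel] using this
  exact succ_ne hk j this.symm

lemma ne_sub_one (j : Fin k) : ¬ (j = j - 1) := fun hc => pred_ne hk j hc.symm

end Facts

lemma mem_Xa {g : Fin k} {s : Bool} {c : Fin (m g)} {j : Fin k} :
    (⟨g, s, c⟩ : Res k m) ∈ Xa k m p A τ j ↔
      p j ∈ A g ∨ (g = j ∧ s = true) ∨ (g = j - 1 ∧ s = τ j) := by
  simp [Xa, mem_Mand, mem_blk, Finset.mem_union]

lemma mem_Ya {g : Fin k} {s : Bool} {c : Fin (m g)} {j : Fin k} :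
    (⟨g, s, c⟩ : Res k m) ∈ Ya k m p A τ j ↔
      p j ∈ A g ∨ (g = j ∧ s = false) ∨ (g = j - 1 ∧ s = !τ j) := by
  simp [Ya, mem_Mand, mem_blk, Finset.mem_union]

lemma act_p (hinj : Function.Injective p) (j : Fin k) :
    (Gstar k m p A τ Wf).act (p j) = {Xa k m p A τ j, Ya k m p A τ j} := by
  show actF k m p A τ (p j) = _
  unfold actF
  have hex : ∃ j', p j' = p j := ⟨j, rfl⟩
  rw [dif_pos hex]
  have : hex.choose = j := hinj hex.choose_spec
  rw [this]

lemma act_other {i : N} (hi : ∀ j, p j ≠ i) :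
    (Gstar k m p A τ Wf).act i = {Mand k m A i} := by
  show actF k m p A τ i = _
  unfold actF
  rw [dif_neg]
  rintro ⟨j, hj⟩
  exact hi j hj

lemma Xa_ne_Ya (hk : 2 ≤ k) (hm : ∀ g, 0 < m g) (hpA : ∀ g, p g ∉ A g)
    (j : Fin k) : Xa k m p A τ j ≠ Ya k m p A τ j := by
  intro hEq
  have hmem : (⟨j, true, ⟨0, hm j⟩⟩ : Res k m) ∈ Xa k m p A τ j := by
    rw [mem_Xa]
    exact Or.inr (Or.inl ⟨rfl, rfl⟩)
  rw [hEq, mem_Ya] at hmem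
  rcases hmem with h | ⟨_, h⟩ | ⟨h, _⟩
  · exact hpA j h
  · simp at h
  · exact ne_sub_one hk j h


section Profile

variable (fD : (Finset N → ℝ) → N → Finset N → ℝ)

variable (hk : 2 ≤ k) (hinj : Function.Injective p)
  (hm : ∀ g, 0 < m g) (hpA : ∀ g, p g ∉ A g) (hpA' : ∀ g, p (g + 1) ∉ A g)
  {a : N → Finset (Res k m)} (ha : Valid k m p A τ Wf a)

lemma mem_Sg {g : Fin k} {b1 b2 : Bool} {i : N} :
    i ∈ Sg k p A g b1 b2 ↔
      i ∈ A g ∨ (b1 = true ∧ i = p g) ∨ (b2 = true ∧ i = p (g + 1)) := by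
  unfold Sg
  cases b1 <;> cases b2 <;> simp [Finset.mem_union] <;> tauto

include hinj ha

lemma a_p (g : Fin k) :
    a (p g) = if xside k m p A τ a g then Xa k m p A τ g else Ya k m p A τ g := by
  have h := ha (p g)
  rw [act_p hinj] at h
  by_cases hx : a (p g) = Xa k m p A τ g
  · simp [xside, hx]
  · have hy : a (p g) = Ya k m p A τ g := by
      rcases Finset.mem_insert.mp h with h | h
      · exact absurd h hx
      · exact Finset.mem_singleton.mp h
    have hne : ¬ (Ya k m p A τ g = Xa k m p A τ g) := fun hc => hx (hy.trans hc)
    simp [xside, hx, hy, hne]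

include hk hpA in
lemma mem_a_own {g : Fin k} {s : Bool} {c : Fin (m g)} :
    ((⟨g, s, c⟩ : Res k m) ∈ a (p g)) ↔ s = xside k m p A τ a g := by
  rw [a_p hinj ha]
  cases hx : xside k m p A τ a g <;> simp only [if_true, if_false, Bool.false_eq_true]
  · rw [mem_Ya]
    simp [hpA g, ne_sub_one hk g]
  · rw [mem_Xa]
    simp [hpA g, ne_sub_one hk g]

include hk hpA' in
lemma mem_a_wire {g : Fin k} {s : Bool} {c : Fin (m g)} :
    ((⟨g, s, c⟩ : Res k m) ∈ a (p (g + 1))) ↔ s = wside k m p A τ a (g + 1) := by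
  rw [a_p hinj ha]
  have h1 : g = (g + 1) - 1 := by rw [add_sub_cancel_right]
  have h2 : ¬ (g = g + 1) := fun hc => succ_ne hk g hc.symm
  unfold wside
  cases hx : xside k m p A τ a (g + 1) <;> simp only [if_true, if_false, Bool.false_eq_true]
  · rw [mem_Ya]
    simp [hpA' g, h2, ← h1]
  · rw [mem_Xa]
    simp [hpA' g, h2, ← h1]

include hk hpA hpA' in
lemma mem_a_other {i : N} {g : Fin k} {s : Bool} {c : Fin (m g)}
    (hig : i ≠ p g) (hig' : i ≠ p (g + 1)) :
    ((⟨g, s, c⟩ : Res k m) ∈ a i) ↔ i ∈ A g := by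
  have h := ha i
  by_cases hcyc : ∃ j, p j = i
  · obtain ⟨j, hj⟩ := hcyc
    subst hj
    have hjg : j ≠ g := fun hc => hig (by rw [hc])
    have hjg' : ¬ (g = j - 1) := by
      intro hc
      apply hig'
      have : j = g + 1 := by rw [hc]; rw [sub_add_cancel]
      rw [this]
    rw [act_p hinj] at h
    rcases Finset.mem_insert.mp h with h | h
    · rw [h, mem_Xa]
      simp [Ne.symm hjg, hjg']
    · rw [Finset.mem_singleton] at h
      rw [h, mem_Ya]
      simp [Ne.symm hjg, hjg']
  · push_neg at hcyc
    rw [act_other (fun j => hcyc j)] at h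
    rw [Finset.mem_singleton] at h
    rw [h, mem_Mand]

include hk hpA hpA' in
lemma playersAt_eq (g : Fin k) (s : Bool) (c : Fin (m g)) :
    playersAt (G := Gstar k m p A τ Wf) a ⟨g, s, c⟩ =
      Sg k p A g (xside k m p A τ a g == s) (wside k m p A τ a (g + 1) == s) := by
  have hpp : p g ≠ p (g + 1) := fun hc => succ_ne hk g (hinj hc).symm
  ext i
  rw [mem_Sg]
  simp only [playersAt, Finset.mem_filter, Finset.mem_univ, true_and]
  by_cases h1 : i = p g
  · subst h1
    rw [mem_a_own hk hinj hpA ha]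
    constructor
    · intro hs
      exact Or.inr (Or.inl ⟨by rw [hs, beq_self_eq_true], rfl⟩)
    · rintro (hA | ⟨hb, _⟩ | ⟨_, heq⟩)
      · exact absurd hA (hpA g)
      · exact (eq_of_beq hb).symm
      · exact absurd heq hpp
  · by_cases h2 : i = p (g + 1)
    · subst h2
      rw [mem_a_wire hk hinj hpA' ha]
      constructor
      · intro hs
        exact Or.inr (Or.inr ⟨by rw [hs, beq_self_eq_true], rfl⟩)
      · rintro (hA | ⟨_, heq⟩ | ⟨hb, _⟩)
        · exact absurd hA (hpA' g)
        · exact absurd heq.symm hpp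
        · exact (eq_of_beq hb).symm
    · rw [mem_a_other hk hinj hpA hpA' ha h1 h2]
      constructor
      · exact fun hA => Or.inl hA
      · rintro (hA | ⟨_, heq⟩ | ⟨_, heq⟩)
        · exact hA
        · exact absurd heq h1
        · exact absurd heq h2

omit hinj ha in
lemma blk_card (g : Fin k) (s : Bool) : (blk k m g s).card = m g := by
  have himg : blk k m g s = Finset.univ.image (fun c : Fin (m g) => (⟨g, s, c⟩ : Res k m)) := by
    ext r
    simp only [mem_blk, Finset.mem_image, Finset.mem_univ, true_and]
    constructor
    · rintro ⟨h1, h2⟩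
      obtain ⟨g', s', c'⟩ := r
      dsimp at h1 h2
      subst h1
      subst h2
      exact ⟨c', rfl⟩
    · rintro ⟨c, rfl⟩
      exact ⟨rfl, rfl⟩
  rw [himg, Finset.card_image_of_injective _ (fun c c' h => by simpa using h),
    Finset.card_univ, Fintype.card_fin]

omit hinj ha in
lemma disj_blk {g1 g2 : Fin k} (s1 s2 : Bool) (h : g1 ≠ g2) :
    Disjoint (blk k m g1 s1) (blk k m g2 s2) := by
  rw [Finset.disjoint_left]
  intro r h1 h2
  rw [mem_blk] at h1 h2
  exact h (h1.1 ▸ h2.1 ▸ rfl)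

omit hinj ha in
lemma disj_Mand {i : N} {g : Fin k} (s : Bool) (hi : i ∉ A g) :
    Disjoint (Mand k m A i) (blk k m g s) := by
  rw [Finset.disjoint_left]
  intro r h1 h2
  rw [mem_Mand] at h1
  rw [mem_blk] at h2
  rw [h2.1] at h1
  exact hi h1

include hinj ha

include hk in
lemma a_p_decomp (j : Fin k) :
    a (p j) = Mand k m A (p j) ∪ blk k m j (xside k m p A τ a j)
      ∪ blk k m (j - 1) (wside k m p A τ a j) := by
  rw [a_p hinj ha j]
  unfold wside
  cases hx : xside k m p A τ a j <;> simp only [hx, if_true, if_false, Bool.false_eq_true] <;> rfl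

lemma valid_update (j : Fin k) {b : Finset (Res k m)}
    (hb : b ∈ (Gstar k m p A τ Wf).act (p j)) :
    Valid k m p A τ Wf (Function.update a (p j) b) := by
  intro i
  rcases eq_or_ne i (p j) with rfl | hne
  · rw [Function.update_self]
    exact hb
  · rw [Function.update_of_ne hne]
    exact ha i

omit ha in
lemma xside_update_ne (j g : Fin k) (hgj : g ≠ j) (b : Finset (Res k m)) :
    xside k m p A τ (Function.update a (p j) b) g = xside k m p A τ a g := by
  unfold xside
  rw [Function.update_of_ne (fun hc => hgj (hinj hc))]

omit ha in
lemma wside_update_ne (j g : Fin k) (hgj : g ≠ j) (b : Finset (Res k m)) :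
    wside k m p A τ (Function.update a (p j) b) g = wside k m p A τ a g := by
  unfold wside
  rw [xside_update_ne hinj j g hgj b]

omit hinj ha in
include hk hm hpA in
lemma xside_update_self (j : Fin k) :
    xside k m p A τ (Function.update a (p j)
      (if xside k m p A τ a j then Ya k m p A τ j else Xa k m p A τ j)) j
      = !(xside k m p A τ a j) := by
  cases hx : xside k m p A τ a j <;>
    simp only [hx, if_true, if_false, Bool.false_eq_true, Bool.not_false, Bool.not_true]
  · show decide _ = true
    rw [Function.update_self]
    simp
  · show decide _ = false
    rw [Function.update_self]
    simp [Ne.symm (Xa_ne_Ya hk hm hpA (τ := τ) j)]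

omit hinj ha in
include hk hm hpA in
lemma wside_update_self (j : Fin k) :
    wside k m p A τ (Function.update a (p j)
      (if xside k m p A τ a j then Ya k m p A τ j else Xa k m p A τ j)) j
      = !(wside k m p A τ a j) := by
  unfold wside
  rw [xside_update_self hk hm hpA j]
  cases hx : xside k m p A τ a j <;> simp [hx]

include hk hm hpA hpA'

lemma sum_blk (j g : Fin k) (s : Bool) :
    ∑ r ∈ blk k m g s, fD (Wf r.1) (p j) (playersAt (G := Gstar k m p A τ Wf) a r)
      = (m g : ℝ) * fD (Wf g) (p j)
          (Sg k p A g (xside k m p A τ a g == s) (wside k m p A τ a (g + 1) == s)) := by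
  have hconst : ∀ r ∈ blk k m g s,
      fD (Wf r.1) (p j) (playersAt (G := Gstar k m p A τ Wf) a r)
        = fD (Wf g) (p j)
            (Sg k p A g (xside k m p A τ a g == s) (wside k m p A τ a (g + 1) == s)) := by
    intro r hr
    obtain ⟨g', s', c⟩ := r
    rw [mem_blk] at hr
    obtain ⟨h1, h2⟩ := hr
    dsimp at h1 h2
    subst h1
    subst h2
    rw [playersAt_eq hk hinj hpA hpA' ha]
  rw [Finset.sum_congr rfl hconst, Finset.sum_const, blk_card, nsmul_eq_mul]

lemma utility_diff (j : Fin k) :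
    utility (Gstar k m p A τ Wf) fD
        (Function.update a (p j) (if xside k m p A τ a j then Ya k m p A τ j else Xa k m p A τ j)) (p j)
      - utility (Gstar k m p A τ Wf) fD a (p j)
    = (m j : ℝ) * (fD (Wf j) (p j) (Sg k p A j true (wside k m p A τ a (j+1) == !(xside k m p A τ a j)))
        - fD (Wf j) (p j) (Sg k p A j true (wside k m p A τ a (j+1) == xside k m p A τ a j)))
      + (m (j-1) : ℝ) * (fD (Wf (j-1)) (p j) (Sg k p A (j-1) (xside k m p A τ a (j-1) == !(wside k m p A τ a j)) true)
        - fD (Wf (j-1)) (p j) (Sg k p A (j-1) (xside k m p A τ a (j-1) == wside k m p A τ a j) true)) := by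
  set Z' := (if xside k m p A τ a j then Ya k m p A τ j else Xa k m p A τ j) with hZ'
  have hZmem : Z' ∈ (Gstar k m p A τ Wf).act (p j) := by
    rw [act_p hinj, hZ']
    cases xside k m p A τ a j <;> simp
  have ha' : Valid k m p A τ Wf (Function.update a (p j) Z') :=
    valid_update hinj ha j hZmem
  have hZdecomp : Z' = Mand k m A (p j) ∪ blk k m j (!(xside k m p A τ a j))
      ∪ blk k m (j - 1) (!(wside k m p A τ a j)) := by
    rw [hZ']
    unfold wside
    cases hx : xside k m p A τ a j <;>
      simp only [hx, if_true, if_false, Bool.false_eq_true, Bool.not_false, Bool.not_true,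
        Bool.not_not] <;> rfl
  have hd1 : ∀ s1 : Bool, Disjoint (Mand k m A (p j)) (blk k m j s1) :=
    fun s1 => disj_Mand s1 (hpA j)
  have hd2 : ∀ s1 : Bool, Disjoint (Mand k m A (p j)) (blk k m (j - 1) s1) := by
    intro s1
    apply disj_Mand
    intro hc
    have := hpA' (j - 1)
    rw [sub_add_cancel] at this
    exact this hc
  have hd3 : ∀ s1 s2 : Bool, Disjoint (blk k m j s1) (blk k m (j - 1) s2) :=
    fun s1 s2 => disj_blk s1 s2 (ne_sub_one hk j)
  have hsplit : ∀ (b : N → Finset (Res k m)), Valid k m p A τ Wf b →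
      ∀ (s1 s2 : Bool),
      ∑ r ∈ Mand k m A (p j) ∪ blk k m j s1 ∪ blk k m (j - 1) s2,
          fD (Wf r.1) (p j) (playersAt (G := Gstar k m p A τ Wf) b r)
        = (∑ r ∈ Mand k m A (p j), fD (Wf r.1) (p j) (playersAt (G := Gstar k m p A τ Wf) b r))
          + (m j : ℝ) * fD (Wf j) (p j)
              (Sg k p A j (xside k m p A τ b j == s1) (wside k m p A τ b (j + 1) == s1))
          + (m (j-1) : ℝ) * fD (Wf (j-1)) (p j)
              (Sg k p A (j-1) (xside k m p A τ b (j-1) == s2) (wside k m p A τ b ((j-1) + 1) == s2)) := by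
    intro b hb s1 s2
    rw [Finset.sum_union (Finset.disjoint_union_left.mpr ⟨hd2 s2, hd3 s1 s2⟩),
      Finset.sum_union (hd1 s1),
      sum_blk fD hk hinj hm hpA hpA' hb j j s1,
      sum_blk fD hk hinj hm hpA hpA' hb j (j-1) s2]
  have hU : utility (Gstar k m p A τ Wf) fD a (p j)
      = (∑ r ∈ Mand k m A (p j), fD (Wf r.1) (p j) (playersAt (G := Gstar k m p A τ Wf) a r))
        + (m j : ℝ) * fD (Wf j) (p j)
            (Sg k p A j true (wside k m p A τ a (j + 1) == xside k m p A τ a j))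
        + (m (j-1) : ℝ) * fD (Wf (j-1)) (p j)
            (Sg k p A (j-1) (xside k m p A τ a (j-1) == wside k m p A τ a j) true) := by
    show ∑ r ∈ a (p j), fD (Wf r.1) (p j) (playersAt (G := Gstar k m p A τ Wf) a r) = _
    rw [a_p_decomp hk hinj ha j,
      hsplit a ha (xside k m p A τ a j) (wside k m p A τ a j)]
    rw [beq_self_eq_true, sub_add_cancel, beq_self_eq_true]
  have hU' : utility (Gstar k m p A τ Wf) fD (Function.update a (p j) Z') (p j)
      = (∑ r ∈ Mand k m A (p j), fD (Wf r.1) (p j) (playersAt (G := Gstar k m p A τ Wf) a r))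
        + (m j : ℝ) * fD (Wf j) (p j)
            (Sg k p A j true (wside k m p A τ a (j + 1) == !(xside k m p A τ a j)))
        + (m (j-1) : ℝ) * fD (Wf (j-1)) (p j)
            (Sg k p A (j-1) (xside k m p A τ a (j-1) == !(wside k m p A τ a j)) true) := by
    show ∑ r ∈ (Function.update a (p j) Z') (p j), fD (Wf r.1) (p j)
        (playersAt (G := Gstar k m p A τ Wf) (Function.update a (p j) Z') r) = _
    rw [Function.update_self]
    have hs := hsplit (Function.update a (p j) Z') ha'
      (!(xside k m p A τ a j)) (!(wside k m p A τ a j))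
    rw [← hZdecomp] at hs
    have hxu : xside k m p A τ (Function.update a (p j) Z') j = !(xside k m p A τ a j) := by
      rw [hZ']
      exact xside_update_self hk hm hpA j
    have hwu : wside k m p A τ (Function.update a (p j) Z') j = !(wside k m p A τ a j) := by
      rw [hZ']
      exact wside_update_self hk hm hpA j
    have hMand : ∑ r ∈ Mand k m A (p j), fD (Wf r.1) (p j)
          (playersAt (G := Gstar k m p A τ Wf) (Function.update a (p j) Z') r)
        = ∑ r ∈ Mand k m A (p j), fD (Wf r.1) (p j)
          (playersAt (G := Gstar k m p A τ Wf) a r) := by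
      apply Finset.sum_congr rfl
      intro r hr
      rw [mem_Mand] at hr
      obtain ⟨g, s0, c⟩ := r
      dsimp only at hr ⊢
      have hgj : g ≠ j := fun hc => hpA j (hc ▸ hr)
      have hgj' : g + 1 ≠ j := fun hc => hpA' g (hc ▸ hr)
      rw [playersAt_eq hk hinj hpA hpA' ha', playersAt_eq hk hinj hpA hpA' ha,
        xside_update_ne hinj j g hgj _, wside_update_ne hinj j (g+1) hgj' _]
    rw [hMand, hxu, sub_add_cancel, hwu,
      wside_update_ne hinj j (j+1) (succ_ne hk j) _,
      xside_update_ne hinj j (j-1) (pred_ne hk j) _, beq_self_eq_true] at hs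
    rw [hs, beq_self_eq_true]
  rw [hU, hU']
  ring

lemma exists_improve
    (hdom : ∀ j : Fin k, (m (j-1) : ℝ) * |dv k p A Wf fD j| < (m j : ℝ) * |bv k p A Wf fD j|)
    (hτ : ∀ g : Fin k, τ g = (if g = 0 then !(decide (0 < bv k p A Wf fD (g-1)))
      else decide (0 < bv k p A Wf fD (g-1)))) :
    ∃ (i : N) (b : Finset (Res k m)), b ∈ (Gstar k m p A τ Wf).act i ∧
      utility (Gstar k m p A τ Wf) fD a i
        < utility (Gstar k m p A τ Wf) fD (Function.update a i b) i := by
  have hbeq_eq : ∀ u v : Bool, u = v → (u == v) = true := fun u v h => by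
    rw [h, beq_self_eq_true]
  have hbeq_eq' : ∀ u v : Bool, u = v → (u == !v) = false := fun u v h => by
    rw [h]; cases v <;> rfl
  have hbeq_ne : ∀ u v : Bool, u ≠ v → (u == v) = false := fun u v h => by
    cases u <;> cases v <;> simp_all
  have hbeq_ne' : ∀ u v : Bool, u ≠ v → (u == !v) = true := fun u v h => by
    cases u <;> cases v <;> simp_all
  have hex : ∃ j : Fin k,
      ¬ ((wside k m p A τ a (j+1) == xside k m p A τ a j)
          = decide (0 < bv k p A Wf fD j)) := by
    by_contra hall
    push_neg at hall
    refine bool_cycle hk (fun g => xside k m p A τ a g) ?_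
    intro j
    have h1 := hall j
    have hw : wside k m p A τ a (j+1)
        = if xside k m p A τ a (j+1) then τ (j+1) else !τ (j+1) := rfl
    rw [hw, hτ (j+1), add_sub_cancel_right] at h1
    by_cases h0 : (j + 1 : Fin k) = 0
    · rw [if_pos h0] at h1
      have hd : decide ((j + 1 : Fin k) ≠ 0) = false := by simp [h0]
      rw [hd]
      exact bool_step _ _ _ h1
    · rw [if_neg h0] at h1
      have hd : decide ((j + 1 : Fin k) ≠ 0) = true := by simp [h0]
      rw [hd]
      exact bool_step' _ _ _ h1
  obtain ⟨j, hj⟩ := hex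
  refine ⟨p j, if xside k m p A τ a j then Ya k m p A τ j else Xa k m p A τ j, ?_, ?_⟩
  · rw [act_p hinj]
    cases xside k m p A τ a j <;> simp
  · have hdiff := utility_diff fD hk hinj hm hpA hpA' ha j
    rw [← sub_pos, hdiff]
    have h0m : (0:ℝ) ≤ (m (j-1) : ℝ) := Nat.cast_nonneg _
    have hdomj := hdom j
    have hBne : bv k p A Wf fD j ≠ 0 := by
      intro hzero
      rw [hzero, abs_zero, mul_zero] at hdomj
      have h2 : (0:ℝ) ≤ (m (j-1) : ℝ) * |dv k p A Wf fD j| := by positivity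
      linarith
    have hDub : (m (j-1) : ℝ) * dv k p A Wf fD j
        ≤ (m (j-1) : ℝ) * |dv k p A Wf fD j| :=
      mul_le_mul_of_nonneg_left (le_abs_self _) h0m
    have hDlb : (m (j-1) : ℝ) * (-|dv k p A Wf fD j|)
        ≤ (m (j-1) : ℝ) * dv k p A Wf fD j :=
      mul_le_mul_of_nonneg_left (neg_abs_le _) h0m
    have hB2 : fD (Wf j) (p j) (Sg k p A j true true)
        - fD (Wf j) (p j) (Sg k p A j true false) = bv k p A Wf fD j := rfl
    have hB1 : fD (Wf j) (p j) (Sg k p A j true false)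
        - fD (Wf j) (p j) (Sg k p A j true true) = -(bv k p A Wf fD j) := by
      rw [← hB2]; ring
    have hD2 : fD (Wf (j-1)) (p j) (Sg k p A (j-1) true true)
        - fD (Wf (j-1)) (p j) (Sg k p A (j-1) false true) = dv k p A Wf fD j := rfl
    have hD1 : fD (Wf (j-1)) (p j) (Sg k p A (j-1) false true)
        - fD (Wf (j-1)) (p j) (Sg k p A (j-1) true true) = -(dv k p A Wf fD j) := by
      rw [← hD2]; ring
    by_cases hex1 : wside k m p A τ a (j+1) = xside k m p A τ a j
    · rw [hbeq_eq' _ _ hex1, hbeq_eq _ _ hex1]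
      have hbf : decide (0 < bv k p A Wf fD j) = false := by
        revert hj
        rw [hbeq_eq _ _ hex1]
        cases decide (0 < bv k p A Wf fD j) <;> simp
      have hBneg : bv k p A Wf fD j < 0 :=
        lt_of_le_of_ne (not_lt.mp (of_decide_eq_false hbf)) hBne
      have habs : |bv k p A Wf fD j| = -(bv k p A Wf fD j) := abs_of_neg hBneg
      rw [hB1]
      by_cases hex2 : xside k m p A τ a (j-1) = wside k m p A τ a j
      · rw [hbeq_eq' _ _ hex2, hbeq_eq _ _ hex2, hD1]
        nlinarith
      · rw [hbeq_ne' _ _ hex2, hbeq_ne _ _ hex2, hD2]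
        nlinarith
    · rw [hbeq_ne' _ _ hex1, hbeq_ne _ _ hex1]
      have hbt : decide (0 < bv k p A Wf fD j) = true := by
        revert hj
        rw [hbeq_ne _ _ hex1]
        cases decide (0 < bv k p A Wf fD j) <;> simp
      have hBpos : 0 < bv k p A Wf fD j := of_decide_eq_true hbt
      have habs : |bv k p A Wf fD j| = bv k p A Wf fD j := abs_of_pos hBpos
      rw [hB2]
      by_cases hex2 : xside k m p A τ a (j-1) = wside k m p A τ a j
      · rw [hbeq_eq' _ _ hex2, hbeq_eq _ _ hex2, hD1]
        nlinarith
      · rw [hbeq_ne' _ _ hex2, hbeq_ne _ _ hex2, hD2]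
        nlinarith

end Profile

end Construction

/-- **Lemma 7 (partial order).** Under the stated hypotheses, `⪰_Ω^+` is a
partial order on `N` modulo `=_Ω^+`: any cycle
`i_1 ⪰_Ω i_2 ⪰_Ω ⋯ ⪰_Ω i_k ⪰_Ω i_1` of distinct players implies
`i_1 =_Ω i_2 =_Ω ⋯ =_Ω i_k =_Ω i_1`. -/
theorem succOmega_partial_order (N : Type) [Fintype N] [DecidableEq N]
    (hN : 1 < Fintype.card N)
    (𝕎 : Set (Finset N → ℝ)) (fD : (Finset N → ℝ) → N → Finset N → ℝ)
    (lam : (Finset N → ℝ) → Finset N → N → ℝ)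
    (S₁ : (Finset N → ℝ) → Finset N → Finset N)
    (hW0 : ∀ W ∈ 𝕎, W ∅ = 0)
    (hlam : ∀ W ∈ 𝕎, ∀ T ∈ supp W, ∀ i : N, 0 < lam W T i)
    (hS₁ : ∀ W ∈ 𝕎, ∀ T ∈ supp W, S₁ W T ⊆ T)
    (hdist : ∀ W ∈ 𝕎, DistRule (fD W))
    (hbb : ∀ W ∈ 𝕎, BudgetBalanced W (fD W))
    (hform : ∀ W ∈ 𝕎, ∀ (i : N) (S : Finset N),
      fD W i S = ∑ T ∈ supp W, coeff W T * fTwoBlock (lam W T) (S₁ W T) T i S)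
    (hPNE : GuaranteesPNE 𝕎 fD)
    (k : ℕ) [NeZero k] (p : Fin k → N) (hinj : Function.Injective p)
    (hcyc : ∀ j : Fin k, succOmega 𝕎 lam S₁ (p j) (p (j + 1))) :
    ∀ j : Fin k, succOmega 𝕎 lam S₁ (p j) (p (j + 1)) ∧
      succOmega 𝕎 lam S₁ (p (j + 1)) (p j) := by
  classical
  have hk1 : 1 ≤ k := Nat.one_le_iff_ne_zero.mpr (NeZero.ne k)
  have key : ∀ j : Fin k, succOmega 𝕎 lam S₁ (p (j + 1)) (p j) := by
    rcases eq_or_lt_of_le hk1 with hk1' | hk2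
    · intro j
      left
      apply congrArg p
      have hsing : Subsingleton (Fin k) := by
        rw [← hk1']
        infer_instance
      exact Subsingleton.elim _ _
    · have hk : 2 ≤ k := hk2
      by_contra hcon
      push_neg at hcon
      obtain ⟨l, hl⟩ := hcon
      have harc : ∀ j : Fin k, ∃ W, W ∈ 𝕎 ∧ ∃ T, T ∈ supp W ∧
          (memTplus (lam W T) (S₁ W T) T (p j) (p (j + 1)) ∧ p j ∈ S₁ W T) := by
        intro j
        have hjj : p j ≠ p (j + 1) := fun hc => succ_ne hk j (hinj hc.symm)
        rcases hcyc j with h | h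
        · exact absurd h hjj
        · exact h
      choose Wc hWmem Tc hTsupp hmemT hS1c using harc
      have hsumpos : ∀ W, W ∈ 𝕎 → ∀ T, T ∈ supp W → ∀ i, i ∈ S₁ W T →
          0 < lam W T i / ∑ z ∈ S₁ W T, lam W T z := by
        intro W hW T hT i hi
        exact div_pos (hlam W hW T hT i)
          (Finset.sum_pos (fun z _ => hlam W hW T hT z) ⟨i, hi⟩)
      have hcoeffne : ∀ j : Fin k, coeff (Wc j) (Tc j) ≠ 0 := by
        intro j
        have h := hTsupp j
        rw [supp, Finset.mem_filter] at h
        exact h.2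
      have hpT' : ∀ j : Fin k, p (j + 1) ∈ Tc j := fun j => (hmemT j).2.1
      have hgfun : ∀ j : Fin k, ∃ Cj : Finset N,
          ∑ T ∈ Cj.powerset, (if p (j+1) ∈ T ∧ T ∈ supp (Wc j) ∧ p j ∈ S₁ (Wc j) T then
            coeff (Wc j) T * (lam (Wc j) T (p j) / ∑ z ∈ S₁ (Wc j) T, lam (Wc j) T z)
          else 0) ≠ 0 := by
        intro j
        apply exists_powerset_sum_ne_zero _ (Tc j)
        rw [if_pos ⟨hpT' j, hTsupp j, hS1c j⟩]
        exact mul_ne_zero (hcoeffne j)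
          (ne_of_gt (hsumpos _ (hWmem j) _ (hTsupp j) _ (hS1c j)))
      choose C hβne using hgfun
      set βs : Fin k → ℝ := fun j => ∑ T ∈ (C j).powerset,
        (if p (j+1) ∈ T ∧ T ∈ supp (Wc j) ∧ p j ∈ S₁ (Wc j) T then
          coeff (Wc j) T * (lam (Wc j) T (p j) / ∑ z ∈ S₁ (Wc j) T, lam (Wc j) T z)
        else 0) with hβsdef
      have hβne' : ∀ j, βs j ≠ 0 := hβne
      set δs : Fin k → ℝ := fun j => ∑ T ∈ (C (j-1)).powerset,
        (if p (j-1) ∈ T ∧ T ∈ supp (Wc (j-1)) ∧ p j ∈ S₁ (Wc (j-1)) T then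
          coeff (Wc (j-1)) T * (lam (Wc (j-1)) T (p j) / ∑ z ∈ S₁ (Wc (j-1)) T, lam (Wc (j-1)) T z)
        else 0) with hδsdef
      have hll : (l + 1 : Fin k) - 1 = l := add_sub_cancel_right l 1
      have hδl : δs (l + 1) = 0 := by
        rw [hδsdef]
        refine Finset.sum_eq_zero ?_
        intro T hT
        rw [if_neg]
        rintro ⟨h1, h2, h3⟩
        rw [hll] at h1 h2 h3
        apply hl
        refine Or.inr ⟨Wc l, hWmem l, T, h2,
          ⟨⟨hS₁ _ (hWmem l) _ h2 h3, h1, Or.inl ?_⟩, h3⟩⟩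
        unfold fTwoBlock
        rw [if_pos ⟨h3, Finset.Subset.refl T⟩]
        exact hsumpos _ (hWmem l) _ h2 _ h3
      have hpC : ∀ j : Fin k, p j ∈ C j ∧ p (j+1) ∈ C j := by
        intro j
        obtain ⟨T, hTmem, hTne⟩ := Finset.exists_ne_zero_of_sum_ne_zero (hβne j)
        by_cases hcond : p (j+1) ∈ T ∧ T ∈ supp (Wc j) ∧ p j ∈ S₁ (Wc j) T
        · have hTC : T ⊆ C j := Finset.mem_powerset.mp hTmem
          exact ⟨hTC (hS₁ _ (hWmem j) _ hcond.2.1 hcond.2.2), hTC hcond.1⟩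
        · rw [if_neg hcond] at hTne
          exact absurd rfl hTne
      set Af : Fin k → Finset N := fun g => C g \ {p g, p (g+1)} with hAfdef
      have hpA : ∀ g, p g ∉ Af g := by
        intro g h
        simp [hAfdef] at h
      have hpA' : ∀ g, p (g+1) ∉ Af g := by
        intro g h
        simp [hAfdef] at h
      obtain ⟨mf, hmpos, hdom⟩ := exists_copies hk βs δs hβne' (l + 1) hδl
      set τf : Fin k → Bool := fun g =>
        if g = 0 then !(decide (0 < bv k p Af Wc fD (g - 1)))
        else decide (0 < bv k p Af Wc fD (g - 1)) with hτfdef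
      -- set identities
      have hins1 : ∀ j : Fin k, insert (p (j+1)) (insert (p j) (Af j)) = C j := by
        intro j
        have h1 := (hpC j).1
        have h2 := (hpC j).2
        ext z
        simp only [hAfdef, Finset.mem_insert, Finset.mem_sdiff, Finset.mem_singleton]
        constructor
        · rintro (rfl | rfl | ⟨hz, _⟩)
          · exact h2
          · exact h1
          · exact hz
        · intro hz
          by_cases hz1 : z = p j
          · exact Or.inr (Or.inl hz1)
          · by_cases hz2 : z = p (j+1)
            · exact Or.inl hz2
            · exact Or.inr (Or.inr ⟨hz, fun hc => hc.elim hz1 hz2⟩)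
      have hins2 : ∀ j : Fin k, insert (p (j-1)) (insert (p j) (Af (j-1))) = C (j-1) := by
        intro j
        have h1 := (hpC (j-1)).1
        have h2 := (hpC (j-1)).2
        rw [sub_add_cancel] at h2
        ext z
        simp only [hAfdef, Finset.mem_insert, Finset.mem_sdiff, Finset.mem_singleton,
          sub_add_cancel]
        constructor
        · rintro (rfl | rfl | ⟨hz, _⟩)
          · exact h1
          · exact h2
          · exact hz
        · intro hz
          by_cases hz1 : z = p (j-1)
          · exact Or.inl hz1
          · by_cases hz2 : z = p j
            · exact Or.inr (Or.inl hz2)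
            · exact Or.inr (Or.inr ⟨hz, fun hc => hc.elim hz1 hz2⟩)
      have hSgtt : ∀ j : Fin k, Sg k p Af j true true
          = insert (p (j+1)) (insert (p j) (Af j)) := by
        intro j
        ext z
        simp only [Sg, if_true, Finset.mem_union, Finset.mem_insert, Finset.mem_singleton]
        tauto
      have hSgtf : ∀ j : Fin k, Sg k p Af j true false = insert (p j) (Af j) := by
        intro j
        ext z
        simp only [Sg, if_true, if_false, Bool.false_eq_true, Finset.mem_union,
          Finset.mem_insert, Finset.mem_singleton, Finset.notMem_empty, or_false]
        tauto
      have hSgwt : ∀ j : Fin k, Sg k p Af (j-1) true true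
          = insert (p (j-1)) (insert (p j) (Af (j-1))) := by
        intro j
        ext z
        simp only [Sg, if_true, Finset.mem_union, Finset.mem_insert, Finset.mem_singleton,
          sub_add_cancel]
        tauto
      have hSgft : ∀ j : Fin k, Sg k p Af (j-1) false true = insert (p j) (Af (j-1)) := by
        intro j
        ext z
        simp only [Sg, if_true, if_false, Bool.false_eq_true, Finset.mem_union,
          Finset.mem_insert, Finset.mem_singleton, Finset.notMem_empty, false_or,
          sub_add_cancel]
        tauto
      have hyD1 : ∀ j : Fin k, p (j+1) ∉ insert (p j) (Af j) := by
        intro j h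
        rcases Finset.mem_insert.mp h with h | h
        · exact succ_ne hk j (hinj h)
        · exact hpA' j h
      have hyD2 : ∀ j : Fin k, p (j-1) ∉ insert (p j) (Af (j-1)) := by
        intro j h
        rcases Finset.mem_insert.mp h with h | h
        · exact pred_ne hk j (hinj h)
        · have := hpA (j-1)
          exact this h
      have hbv : ∀ j : Fin k, bv k p Af Wc fD j = βs j := by
        intro j
        have h4 := fD_insert_diff (Wc j) (lam (Wc j)) (S₁ (Wc j)) (fD (Wc j))
          (hform (Wc j) (hWmem j)) (p j) (p (j+1)) (insert (p j) (Af j)) (hyD1 j)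
        rw [hins1 j] at h4
        show fD (Wc j) (p j) (Sg k p Af j true true)
          - fD (Wc j) (p j) (Sg k p Af j true false) = βs j
        rw [hSgtt j, hins1 j, hSgtf j, h4, hβsdef]
      have hdv : ∀ j : Fin k, dv k p Af Wc fD j = δs j := by
        intro j
        have h5 := fD_insert_diff (Wc (j-1)) (lam (Wc (j-1))) (S₁ (Wc (j-1))) (fD (Wc (j-1)))
          (hform (Wc (j-1)) (hWmem (j-1))) (p j) (p (j-1)) (insert (p j) (Af (j-1))) (hyD2 j)
        rw [hins2 j] at h5
        show fD (Wc (j-1)) (p j) (Sg k p Af (j-1) true true)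
          - fD (Wc (j-1)) (p j) (Sg k p Af (j-1) false true) = δs j
        rw [hSgwt j, hins2 j, hSgft j, h5, hδsdef]
      have hdom' : ∀ j : Fin k,
          (mf (j-1) : ℝ) * |dv k p Af Wc fD j| < (mf j : ℝ) * |bv k p Af Wc fD j| := by
        intro j
        rw [hbv j, hdv j]
        exact hdom j
      have hτrfl : ∀ g : Fin k, τf g = (if g = 0 then !(decide (0 < bv k p Af Wc fD (g-1)))
          else decide (0 < bv k p Af Wc fD (g-1))) := by
        intro g
        rw [hτfdef]
      obtain ⟨a, haMem, haBest⟩ := hPNE (Gstar k mf p Af τf Wc) (fun r => hWmem r.1)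
      obtain ⟨i, b, hbmem, himp⟩ :=
        exists_improve fD hk hinj hmpos hpA hpA' haMem hdom' hτrfl
      exact absurd (haBest i b hbmem) (not_le.mpr himp)
  exact fun j => ⟨hcyc j, key j⟩



end CostSharing
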